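/- Let F, G be homogeneous polynomials in ℂ[x₁, …, x_m] with F irreducible and G of degree 2n (n ≥ 1). Suppose that every iterated partial derivative of G of order at most n−1 (including G itself) vanishes at every point of the zero locus V(F) = {x ∈ ℂ^m : F(x) = 0}. Then Fⁿ divides G. Moreover, if G ≠ 0 and deg F ≥ 2, then deg F = 2 and G = c·Fⁿ for some nonzero constant c ∈ ℂ. -/

import Mathlib

open MvPolynomial

namespace VanishingDerivAux

variable {m : ℕ}

lemma coeff_pderiv (i : Fin m) (F : MvPolynomial (Fin m) ℂ) (d : Fin m →₀ ℕ) :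
    coeff d (pderiv i F) = ((d i : ℂ) + 1) * coeff (d + Finsupp.single i 1) F := by
  classical
  induction F using MvPolynomial.induction_on' with
  | add p q hp hq => simp [coeff_add, hp, hq, mul_add]
  | monomial s a =>
    rw [pderiv_monomial, coeff_monomial, coeff_monomial]
    by_cases hs : s = d + Finsupp.single i 1
    · have hsd : s - Finsupp.single i 1 = d := by
        subst hs
        ext j
        simp only [Finsupp.tsub_apply, Finsupp.add_apply, Finsupp.single_apply]
        by_cases hij : i = j <;> simp [hij]
      rw [if_pos hsd, if_pos hs]
      have hsi : (s i : ℂ) = (d i : ℂ) + 1 := by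
        subst hs
        simp [Finsupp.add_apply, Finsupp.single_apply]
      rw [hsi]; ring
    · rw [if_neg hs, mul_zero]
      by_cases h0 : s i = 0
      · split <;> simp [h0]
      · have hsd : s - Finsupp.single i 1 ≠ d := by
          intro h
        -- derive s = d + single i 1
          apply hs
          ext j
          have hj := DFunLike.congr_fun h j
          simp only [Finsupp.tsub_apply, Finsupp.single_apply, Finsupp.add_apply] at hj ⊢
          by_cases hij : i = j
          · subst hij; simp at hj ⊢; omega
          · simp [hij] at hj ⊢; omega
        rw [if_neg hsd]

lemma isHomogeneous_pderiv {F : MvPolynomial (Fin m) ℂ} {k : ℕ}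
    (hF : F.IsHomogeneous k) (i : Fin m) : (pderiv i F).IsHomogeneous (k - 1) := by
  intro d hd
  rw [coeff_pderiv] at hd
  have h2 : coeff (d + Finsupp.single i 1) F ≠ 0 := by
    intro h; rw [h, mul_zero] at hd; exact hd rfl
  have h3 := hF h2
  rw [map_add] at h3
  have h4 : (Finsupp.weight (1 : Fin m → ℕ)) (Finsupp.single i 1) = 1 := by
    simp [Finsupp.weight_apply, Finsupp.sum_single_index]
  rw [h4] at h3
  omega

lemma eq_C_of_all_pderiv_zero {F : MvPolynomial (Fin m) ℂ}
    (h : ∀ i, pderiv i F = 0) : F = C (coeff 0 F) := by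
  classical
  ext d
  rw [coeff_C]
  by_cases hd : (0 : Fin m →₀ ℕ) = d
  · rw [if_pos hd, ← hd]
  · rw [if_neg hd]
    have hex : ∃ i, d i ≠ 0 := by
      by_contra hc
      push_neg at hc
      exact hd (by ext j; simpa using (hc j).symm)
    obtain ⟨i, hi⟩ := hex
    have hc := coeff_pderiv i F (d - Finsupp.single i 1)
    rw [h i] at hc
    have hdd : d - Finsupp.single i 1 + Finsupp.single i 1 = d := by
      ext j
      simp only [Finsupp.add_apply, Finsupp.tsub_apply, Finsupp.single_apply]
      by_cases hij : i = j
      · subst hij; simp; omega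
      · simp [hij]
    rw [hdd] at hc
    simp only [coeff_zero] at hc
    have hne : (((d - Finsupp.single i 1 : Fin m →₀ ℕ) i : ℕ) : ℂ) + 1 ≠ 0 :=
      Nat.cast_add_one_ne_zero _
    rcases mul_eq_zero.mp hc.symm with h1 | h2
    · exact absurd h1 hne
    · exact h2

lemma dvd_of_eval_zero {F p : MvPolynomial (Fin m) ℂ} (hF : Irreducible F)
    (h : ∀ x, eval x F = 0 → eval x p = 0) : F ∣ p := by
  have hmem : p ∈ (Ideal.span {F} : Ideal (MvPolynomial (Fin m) ℂ)).radical := by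
    rw [← vanishingIdeal_zeroLocus_eq_radical (K := ℂ)]
    intro x hx
    exact h x (hx F (Ideal.subset_span rfl))
  obtain ⟨k, hk⟩ := hmem
  rw [Ideal.mem_span_singleton] at hk
  exact (UniqueFactorizationMonoid.irreducible_iff_prime.mp hF).dvd_of_dvd_pow hk

lemma hom_factor {A B Q : MvPolynomial (Fin m) ℂ} {a b : ℕ} (hA : A.IsHomogeneous a)
    (hB : B.IsHomogeneous b) (hA0 : A ≠ 0) (hAB : A = B * Q) :
    b ≤ a ∧ ∃ c : MvPolynomial (Fin m) ℂ,
      c.IsHomogeneous (a - b) ∧ c ≠ 0 ∧ A = B * c := by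
  classical
  have hA' : homogeneousComponent a A = A := by
    rw [homogeneousComponent_of_mem ((mem_homogeneousSubmodule _ _).mpr hA), if_pos rfl]
  have hsum : A = ∑ k ∈ Finset.range (Q.totalDegree + 1),
      (if a = b + k then B * homogeneousComponent k Q else 0) := by
    conv_lhs => rw [← hA', hAB, ← sum_homogeneousComponent Q]
    rw [Finset.mul_sum, map_sum]
    refine Finset.sum_congr rfl fun k _ => ?_
    exact homogeneousComponent_of_mem ((mem_homogeneousSubmodule _ _).mpr
      (hB.mul (homogeneousComponent_isHomogeneous k Q)))
  have hba : b ≤ a := by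
    by_contra hba
    exact hA0 (hsum.trans (Finset.sum_eq_zero fun k _ => if_neg (by omega)))
  have heq : A = if a - b ∈ Finset.range (Q.totalDegree + 1)
      then B * homogeneousComponent (a - b) Q else 0 := by
    rw [hsum, ← Finset.sum_ite_eq' (Finset.range (Q.totalDegree + 1)) (a - b)
      (fun k => B * homogeneousComponent k Q)]
    refine Finset.sum_congr rfl fun k _ => ?_
    have hcond : (a = b + k) ↔ (k = a - b) := by omega
    exact if_congr hcond rfl rfl
  by_cases hmem : a - b ∈ Finset.range (Q.totalDegree + 1)
  · rw [if_pos hmem] at heq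
    refine ⟨hba, homogeneousComponent (a - b) Q,
      homogeneousComponent_isHomogeneous _ _, ?_, heq⟩
    intro h0
    exact hA0 (by rw [heq, h0, mul_zero])
  · rw [if_neg hmem] at heq
    exact absurd heq hA0

lemma irr_ne_C {F : MvPolynomial (Fin m) ℂ} (hFirr : Irreducible F) (c : ℂ) :
    F ≠ C c := by
  intro h
  rcases eq_or_ne c 0 with rfl | hc
  · exact hFirr.ne_zero (by simpa using h)
  · exact hFirr.not_isUnit (h ▸ (isUnit_iff_ne_zero.mpr hc).map (C : ℂ →+* _))

lemma eq_C_of_isHomogeneous_zero {p : MvPolynomial (Fin m) ℂ}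
    (h : p.IsHomogeneous 0) : p = C (coeff 0 p) := by
  have h1 := homogeneousComponent_of_mem (m := 0)
    ((mem_homogeneousSubmodule _ _).mpr h)
  rw [if_pos rfl] at h1
  conv_lhs => rw [← h1, homogeneousComponent_zero]

lemma exists_good {F : MvPolynomial (Fin m) ℂ} {dF : ℕ} (hFirr : Irreducible F)
    (hFhom : F.IsHomogeneous dF) : ∃ i, ¬ F ∣ pderiv i F := by
  by_contra hall
  push_neg at hall
  have hF0 : F ≠ 0 := hFirr.ne_zero
  have hdF : 1 ≤ dF := by
    rcases Nat.eq_zero_or_pos dF with h0 | h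
    · subst h0
      exact absurd (eq_C_of_isHomogeneous_zero hFhom) (irr_ne_C hFirr _)
    · exact h
  have hz : ∀ i, pderiv i F = 0 := by
    intro i
    by_contra hne
    obtain ⟨Q, hQ⟩ := hall i
    obtain ⟨hba, -⟩ := hom_factor (isHomogeneous_pderiv hFhom i) hFhom hne hQ
    omega
  exact absurd (eq_C_of_all_pderiv_zero hz) (irr_ne_C hFirr _)

lemma main_dvd {F : MvPolynomial (Fin m) ℂ} (hFirr : Irreducible F)
    {i : Fin m} (hgood : ¬ F ∣ pderiv i F) :
    ∀ (n : ℕ) (G : MvPolynomial (Fin m) ℂ),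
      (∀ L : List (Fin m), L.length ≤ n - 1 →
        ∀ x : Fin m → ℂ, eval x F = 0 →
          eval x (L.foldr (fun j p => pderiv j p) G) = 0) →
      F ^ n ∣ G := by
  have hF0 : F ≠ 0 := hFirr.ne_zero
  have hprime := UniqueFactorizationMonoid.irreducible_iff_prime.mp hFirr
  intro n
  induction n with
  | zero => intro G _; rw [pow_zero]; exact one_dvd G
  | succ N IH =>
    intro G hvan
    have hder : ∀ j : Fin m, F ^ N ∣ pderiv j G := by
      intro j
      rcases Nat.eq_zero_or_pos N with h0 | hpos
      · subst h0; rw [pow_zero]; exact one_dvd _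
      apply IH
      intro L hL x hx
      have hlen : (L ++ [j]).length ≤ (N + 1) - 1 := by
        simp only [List.length_append, List.length_singleton]
        omega
      have := hvan (L ++ [j]) hlen x hx
      rwa [List.foldr_append] at this
    have hF1 : F ∣ G := dvd_of_eval_zero hFirr fun x hx => hvan [] (by simp) x hx
    have inner : ∀ k, k ≤ N → F ^ (k + 1) ∣ G := by
      intro k
      induction k with
      | zero => intro _; simpa using hF1
      | succ k IHk =>
        intro hk
        obtain ⟨K, hK⟩ := IHk (by omega)
        have hdvd : F ^ (k + 1) ∣ pderiv i G :=
          (pow_dvd_pow F (by omega : k + 1 ≤ N)).trans (hder i)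
        rw [hK, pderiv_mul, pderiv_pow, Nat.add_sub_cancel] at hdvd
        have h3 : F ^ (k + 1) ∣ F ^ (k + 1) * pderiv i K := Dvd.intro _ rfl
        have h2 : F ^ (k + 1) ∣ ((k + 1 : ℕ) : MvPolynomial (Fin m) ℂ)
            * F ^ k * pderiv i F * K := (dvd_add_left h3).mp hdvd
        have h4 : F ∣ ((k + 1 : ℕ) : MvPolynomial (Fin m) ℂ) * (pderiv i F * K) := by
          rw [pow_succ] at h2
          have hx : ((k + 1 : ℕ) : MvPolynomial (Fin m) ℂ) * F ^ k * pderiv i F * K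
              = F ^ k * (((k + 1 : ℕ) : MvPolynomial (Fin m) ℂ) * (pderiv i F * K)) := by
            ring
          rw [hx] at h2
          exact (mul_dvd_mul_iff_left (pow_ne_zero k hF0)).mp h2
        have hunit : IsUnit ((k + 1 : ℕ) : MvPolynomial (Fin m) ℂ) := by
          rw [← map_natCast (C : ℂ →+* MvPolynomial (Fin m) ℂ)]
          exact (isUnit_iff_ne_zero.mpr
            (Nat.cast_ne_zero.mpr (Nat.succ_ne_zero k))).map (C : ℂ →+* _)
        rcases hprime.2.2 _ _ h4 with hu | h5
        · exact absurd (isUnit_of_dvd_unit hu hunit) hFirr.not_isUnit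
        rcases hprime.2.2 _ _ h5 with hdF | hK'
        · exact absurd hdF hgood
        obtain ⟨K', rfl⟩ := hK'
        exact ⟨K', by rw [hK]; ring⟩
    exact inner N le_rfl

end VanishingDerivAux

/-- The algebraic step in the Beauville–Fujiki proof of existence of the
Beauville–Bogomolov form: if `F` is an irreducible homogeneous polynomial and
`G` is homogeneous of degree `2n` (`n ≥ 1`) such that every iterated partial
derivative of `G` of order at most `n-1` (including `G` itself) vanishes on the
zero locus of `F`, then `Fⁿ ∣ G`; moreover if `G ≠ 0` and `deg F ≥ 2` then
`deg F = 2` and `G = c·Fⁿ` for some nonzero constant `c`. -/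
theorem vanishing_derivatives_power (m n : ℕ) (hn : 1 ≤ n)
    (F G : MvPolynomial (Fin m) ℂ) (dF : ℕ)
    (hFirr : Irreducible F) (hFhom : F.IsHomogeneous dF)
    (hGhom : G.IsHomogeneous (2 * n))
    (hvan : ∀ L : List (Fin m), L.length ≤ n - 1 →
      ∀ x : Fin m → ℂ, MvPolynomial.eval x F = 0 →
        MvPolynomial.eval x (L.foldr (fun i p => MvPolynomial.pderiv i p) G) = 0) :
    F ^ n ∣ G ∧
      (G ≠ 0 → 2 ≤ dF →
        dF = 2 ∧ ∃ c : ℂ, c ≠ 0 ∧ G = MvPolynomial.C c * F ^ n) := by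
  obtain ⟨i, hgood⟩ := VanishingDerivAux.exists_good hFirr hFhom
  have hdvd : F ^ n ∣ G := VanishingDerivAux.main_dvd hFirr hgood n G hvan
  refine ⟨hdvd, fun hG0 hdF2 => ?_⟩
  obtain ⟨H, hH⟩ := hdvd
  obtain ⟨hba, c0, hc0hom, hc0ne, hGeq⟩ :=
    VanishingDerivAux.hom_factor hGhom (hFhom.pow n) hG0 hH
  have hdF : dF = 2 := by
    have h1 : dF ≤ 2 := Nat.le_of_mul_le_mul_right (by omega) (by omega : 0 < n)
    omega
  subst hdF
  have h0 : 2 * n - 2 * n = 0 := by omega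
  have hc0const : c0 = MvPolynomial.C (MvPolynomial.coeff 0 c0) := by
    apply VanishingDerivAux.eq_C_of_isHomogeneous_zero
    have : 2 * n - 2 * n = 0 := by omega
    rw [show (0 : ℕ) = 2 * n - 2 * n by omega]
    exact hc0hom
  refine ⟨rfl, MvPolynomial.coeff 0 c0, ?_, ?_⟩
  · intro h
    exact hc0ne (by rw [hc0const, h, map_zero])
  · rw [hGeq]
    conv_lhs => rw [hc0const]
    ring
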